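/- Every door gadget (whether its opening mechanism is a tunnel or a port, and whether each tunnel is directed or undirected) can simulate its corresponding open-optional door, i.e., the door obtained by replacing its opening tunnel with a single opening port: wiring one end of the opening tunnel to the other end and attaching the external connection to a point on this loop yields a system whose external behavior between ports realizes exactly the transitive closure of the open-optional door. -/

import Mathlib

/-- A 1-player gadget: a finite set of states, a finite set of locations,
and a set of traversals between state–location pairs. -/
structure Gadget where
  State : Type
  Loc : Type
  stateFin : Fintype State
  locFin : Fintype Loc
  trav : (State × Loc) → (State × Loc) → Prop

open Classical in
/-- Update the state of one gadget instance in a global state. -/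
noncomputable def updState {ι St : Type} (σg : ι → St) (i : ι) (s : St) : ι → St :=
  fun j => if j = i then s else σg j

/-- A system of copies of the gadget `G`: a finite collection of instances together with
symmetric connections (pairings of locations) along which the agent moves freely. -/
structure System (G : Gadget) where
  ι : Type
  instFin : Fintype ι
  conn : (ι × G.Loc) → (ι × G.Loc) → Prop
  conn_symm : ∀ x y, conn x y → conn y x

/-- A single move of the agent in a system: a traversal inside one instance
(changing only that instance's state), or a free move along a connection. -/
inductive SysStep (G : Gadget) (S : System G) :
    ((S.ι → G.State) × (S.ι × G.Loc)) → ((S.ι → G.State) × (S.ι × G.Loc)) → Prop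
  | trav {σg : S.ι → G.State} {i : S.ι} {a b : G.Loc} {s' : G.State} :
      G.trav (σg i, a) (s', b) →
      SysStep G S (σg, (i, a)) (updState σg i s', (i, b))
  | move {σg : S.ι → G.State} {x y : S.ι × G.Loc} :
      S.conn x y → SysStep G S (σg, x) (σg, y)

/-- `Simulates G' G` : there is a system of copies of `G'`, with external locations
identified (injectively) with the locations of `G` and an injective encoding of the
states of `G` as global states, whose reachability behavior between external locations
in encoded global states is exactly the transitive closure of `G`. -/
def Simulates (G' G : Gadget) : Prop :=
  ∃ S : System G', ∃ ext : G.Loc → S.ι × G'.Loc, ∃ enc : G.State → (S.ι → G'.State),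
    Function.Injective ext ∧ Function.Injective enc ∧
    ∀ s s' a b,
      Relation.ReflTransGen (SysStep G' S) (enc s, ext a) (enc s', ext b) ↔
      Relation.ReflTransGen G.trav (s, a) (s', b)

/-! ### Doors.  State `true` = open, `false` = closed.
A direction flag `true` means the corresponding tunnel is directed,
`false` that it is undirected. -/

/-- Locations of a door with an opening tunnel: entrance/exit of the opening (`O`),
traverse (`T`) and closing (`C`) tunnels. -/
inductive DoorLoc | O0 | O1 | T0 | T1 | C0 | C1
deriving DecidableEq

instance : Fintype DoorLoc :=
  Fintype.ofList [DoorLoc.O0, DoorLoc.O1, DoorLoc.T0, DoorLoc.T1, DoorLoc.C0, DoorLoc.C1] (by intro x; cases x <;> decide)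

/-- Traversals of a door with an opening tunnel; `dO`, `dT`, `dC` record whether the
opening, traverse, closing tunnels are directed. -/
def doorTrav (dO dT dC : Bool) : (Bool × DoorLoc) → (Bool × DoorLoc) → Prop := fun x y =>
  (x.2 = DoorLoc.O0 ∧ y = (true, DoorLoc.O1)) ∨
  (dO = false ∧ x.2 = DoorLoc.O1 ∧ y = (true, DoorLoc.O0)) ∨
  (x.1 = true ∧ x.2 = DoorLoc.T0 ∧ y = (true, DoorLoc.T1)) ∨
  (dT = false ∧ x.1 = true ∧ x.2 = DoorLoc.T1 ∧ y = (true, DoorLoc.T0)) ∨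
  (x.2 = DoorLoc.C0 ∧ y = (false, DoorLoc.C1)) ∨
  (dC = false ∧ x.2 = DoorLoc.C1 ∧ y = (false, DoorLoc.C0))

/-- The door with an opening tunnel (an open-required door). -/
def doorGadget (dO dT dC : Bool) : Gadget :=
  ⟨Bool, DoorLoc, inferInstance, inferInstance, doorTrav dO dT dC⟩

/-- Locations of an open-optional door: opening port `O` plus traverse and closing tunnels. -/
inductive ODoorLoc | O | T0 | T1 | C0 | C1
deriving DecidableEq

instance : Fintype ODoorLoc :=
  Fintype.ofList [ODoorLoc.O, ODoorLoc.T0, ODoorLoc.T1, ODoorLoc.C0, ODoorLoc.C1] (by intro x; cases x <;> decide)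

/-- Traversals of an open-optional door: a visit to the opening port `O` sets the state
to open; `dT`, `dC` record whether the traverse and closing tunnels are directed. -/
def openOptDoorTrav (dT dC : Bool) : (Bool × ODoorLoc) → (Bool × ODoorLoc) → Prop := fun x y =>
  (x.2 = ODoorLoc.O ∧ y = (true, ODoorLoc.O)) ∨
  (x.1 = true ∧ x.2 = ODoorLoc.T0 ∧ y = (true, ODoorLoc.T1)) ∨
  (dT = false ∧ x.1 = true ∧ x.2 = ODoorLoc.T1 ∧ y = (true, ODoorLoc.T0)) ∨
  (x.2 = ODoorLoc.C0 ∧ y = (false, ODoorLoc.C1)) ∨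
  (dC = false ∧ x.2 = ODoorLoc.C1 ∧ y = (false, ODoorLoc.C0))

/-- The open-optional door. -/
def openOptDoorGadget (dT dC : Bool) : Gadget :=
  ⟨Bool, ODoorLoc, inferInstance, inferInstance, openOptDoorTrav dT dC⟩

/-- A diode: a 1-state gadget with one always-traversable directed tunnel. -/
inductive DiodeLoc | inp | out
deriving DecidableEq

instance : Fintype DiodeLoc :=
  Fintype.ofList [DiodeLoc.inp, DiodeLoc.out] (by intro x; cases x <;> decide)

def diode : Gadget :=
  ⟨Unit, DiodeLoc, inferInstance, inferInstance,
    fun x y => x.2 = DiodeLoc.inp ∧ y.2 = DiodeLoc.out⟩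

/-- Locations of an open-required normal self-closing door. -/
inductive SCDLoc | O0 | O1 | T0 | T1
deriving DecidableEq

instance : Fintype SCDLoc :=
  Fintype.ofList [SCDLoc.O0, SCDLoc.O1, SCDLoc.T0, SCDLoc.T1] (by intro x; cases x <;> decide)

/-- Open-required normal self-closing door: opening tunnel `O` (always traversable, sets
the state to open), self-closing tunnel `T` (traversable exactly when open, sets closed). -/
def nSCDTrav (dO dT : Bool) : (Bool × SCDLoc) → (Bool × SCDLoc) → Prop := fun x y =>
  (x.2 = SCDLoc.O0 ∧ y = (true, SCDLoc.O1)) ∨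
  (dO = false ∧ x.2 = SCDLoc.O1 ∧ y = (true, SCDLoc.O0)) ∨
  (x.1 = true ∧ x.2 = SCDLoc.T0 ∧ y = (false, SCDLoc.T1)) ∨
  (dT = false ∧ x.1 = true ∧ x.2 = SCDLoc.T1 ∧ y = (false, SCDLoc.T0))

def nSCD (dO dT : Bool) : Gadget :=
  ⟨Bool, SCDLoc, inferInstance, inferInstance, nSCDTrav dO dT⟩

/-- Locations of an open-optional normal self-closing door. -/
inductive OOSCDLoc | O | T0 | T1
deriving DecidableEq

instance : Fintype OOSCDLoc :=
  Fintype.ofList [OOSCDLoc.O, OOSCDLoc.T0, OOSCDLoc.T1] (by intro x; cases x <;> decide)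

/-- Open-optional normal self-closing door: opening port `O` (visit sets the state to
open), self-closing tunnel `T` (traversable exactly when open, sets the state closed). -/
def ooSCDTrav (dT : Bool) : (Bool × OOSCDLoc) → (Bool × OOSCDLoc) → Prop := fun x y =>
  (x.2 = OOSCDLoc.O ∧ y = (true, OOSCDLoc.O)) ∨
  (x.1 = true ∧ x.2 = OOSCDLoc.T0 ∧ y = (false, OOSCDLoc.T1)) ∨
  (dT = false ∧ x.1 = true ∧ x.2 = OOSCDLoc.T1 ∧ y = (false, OOSCDLoc.T0))

def ooSCD (dT : Bool) : Gadget :=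
  ⟨Bool, OOSCDLoc, inferInstance, inferInstance, ooSCDTrav dT⟩

/-- Locations of a symmetric self-closing door. -/
inductive SymSCDLoc | A0 | A1 | B0 | B1
deriving DecidableEq

instance : Fintype SymSCDLoc :=
  Fintype.ofList [SymSCDLoc.A0, SymSCDLoc.A1, SymSCDLoc.B0, SymSCDLoc.B1] (by intro x; cases x <;> decide)

/-- Symmetric self-closing door: self-opening tunnel `A` (traversable exactly when closed,
sets the state open), self-closing tunnel `B` (traversable exactly when open, sets closed). -/
def symSCDTrav (dA dB : Bool) : (Bool × SymSCDLoc) → (Bool × SymSCDLoc) → Prop := fun x y =>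
  (x.1 = false ∧ x.2 = SymSCDLoc.A0 ∧ y = (true, SymSCDLoc.A1)) ∨
  (dA = false ∧ x.1 = false ∧ x.2 = SymSCDLoc.A1 ∧ y = (true, SymSCDLoc.A0)) ∨
  (x.1 = true ∧ x.2 = SymSCDLoc.B0 ∧ y = (false, SymSCDLoc.B1)) ∨
  (dB = false ∧ x.1 = true ∧ x.2 = SymSCDLoc.B1 ∧ y = (false, SymSCDLoc.B0))

def symSCD (dA dB : Bool) : Gadget :=
  ⟨Bool, SymSCDLoc, inferInstance, inferInstance, symSCDTrav dA dB⟩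

/-! ### Auxiliary machinery for the proof -/

lemma updState_unit {St : Type} (σ : Unit → St) (s : St) :
    updState σ () s = fun _ => s := by
  funext j; cases j; simp [updState]

/-- location map for the simulation: collapse the opening tunnel to a port -/
def dloc2o : DoorLoc → ODoorLoc
  | .O0 => .O | .O1 => .O | .T0 => .T0 | .T1 => .T1 | .C0 => .C0 | .C1 => .C1

/-- embedding of open-optional locations into door locations -/
def oloc2d : ODoorLoc → DoorLoc
  | .O => .O0 | .T0 => .T0 | .T1 => .T1 | .C0 => .C0 | .C1 => .C1

lemma dloc2o_oloc2d : ∀ l, dloc2o (oloc2d l) = l := by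
  intro l; cases l <;> rfl

/-- The system: one copy of the door, with the two ends of the opening tunnel wired. -/
def doorSys (dO dT dC : Bool) : System (doorGadget dO dT dC) where
  ι := Unit
  instFin := inferInstance
  conn x y := (x.2 = DoorLoc.O0 ∧ y.2 = DoorLoc.O1) ∨ (x.2 = DoorLoc.O1 ∧ y.2 = DoorLoc.O0)
  conn_symm := by tauto

lemma doorSys_forward {dO dT dC : Bool} :
    ∀ p q, Relation.ReflTransGen (SysStep (doorGadget dO dT dC) (doorSys dO dT dC)) p q →
      Relation.ReflTransGen (openOptDoorTrav dT dC) (p.1 (), dloc2o p.2.2) (q.1 (), dloc2o q.2.2) := by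
  intro p q h
  induction h with
  | refl => exact .refl
  | tail _ hstep ih =>
    cases hstep with
    | @trav σg i a b s' htr =>
      refine ih.tail ?_
      have hi : σg i = σg () := by cases i; rfl
      have hupd : updState σg i s' () = s' := by cases i; exact if_pos rfl
      dsimp only
      rw [hupd]
      rcases htr with ⟨h1, h2⟩ | ⟨hd, h1, h2⟩ | ⟨h0, h1, h2⟩ | ⟨hd, h0, h1, h2⟩ |
        ⟨h1, h2⟩ | ⟨hd, h1, h2⟩ <;>
        dsimp only at h1 <;> subst h1 <;>
        (try injection h2 with h2a h2b) <;> (try subst h2a) <;> (try subst h2b) <;>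
        simp only [dloc2o, openOptDoorTrav]
      · tauto
      · tauto
      · rw [hi] at h0; tauto
      · rw [hi] at h0; tauto
      · tauto
      · tauto
    | @move σg x y hc =>
      rcases hc with ⟨h1, h2⟩ | ⟨h1, h2⟩ <;> dsimp only at ih ⊢ <;>
        rw [h1] at ih <;> rw [h2] <;> exact ih

lemma doorSys_backward {dO dT dC : Bool} :
    ∀ (p q : Bool × ODoorLoc), Relation.ReflTransGen (openOptDoorTrav dT dC) p q →
      Relation.ReflTransGen (SysStep (doorGadget dO dT dC) (doorSys dO dT dC))
        ((fun _ => p.1), ((), oloc2d p.2)) ((fun _ => q.1), ((), oloc2d q.2)) := by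
  intro p q h
  induction h with
  | refl => exact .refl
  | @tail m q _ hstep ih =>
    refine ih.trans ?_
    obtain ⟨s, l⟩ := m
    dsimp only at hstep ih ⊢
    rcases hstep with ⟨h1, h2⟩ | ⟨h0, h1, h2⟩ | ⟨hd, h0, h1, h2⟩ | ⟨h1, h2⟩ | ⟨hd, h1, h2⟩ <;>
      (try subst h0) <;> subst h1 <;> subst h2 <;> dsimp only [oloc2d]
    · -- open via the loop: traverse O0 → O1, then move back O1 → O0
      refine Relation.ReflTransGen.head
        (SysStep.trav (G := doorGadget dO dT dC) (S := doorSys dO dT dC)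
          (σg := fun _ => s) (i := ()) (a := DoorLoc.O0) (b := DoorLoc.O1)
          (s' := true) (by simp [doorGadget, doorTrav])) ?_
      erw [updState_unit]
      exact Relation.ReflTransGen.single (SysStep.move (by simp [doorSys]; exact ⟨rfl, rfl⟩))
    · have := Relation.ReflTransGen.single
        (SysStep.trav (G := doorGadget dO dT dC) (S := doorSys dO dT dC)
          (σg := fun _ => true) (i := ()) (a := DoorLoc.T0) (b := DoorLoc.T1)
          (s' := true) (by simp [doorGadget, doorTrav]))
      erw [updState_unit] at this; exact this
    · have := Relation.ReflTransGen.single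
        (SysStep.trav (G := doorGadget dO dT dC) (S := doorSys dO dT dC)
          (σg := fun _ => true) (i := ()) (a := DoorLoc.T1) (b := DoorLoc.T0)
          (s' := true) (by simp [doorGadget, doorTrav, hd]))
      erw [updState_unit] at this; exact this
    · have := Relation.ReflTransGen.single
        (SysStep.trav (G := doorGadget dO dT dC) (S := doorSys dO dT dC)
          (σg := fun _ => s) (i := ()) (a := DoorLoc.C0) (b := DoorLoc.C1)
          (s' := false) (by simp [doorGadget, doorTrav]))
      erw [updState_unit] at this; exact this
    · have := Relation.ReflTransGen.single
        (SysStep.trav (G := doorGadget dO dT dC) (S := doorSys dO dT dC)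
          (σg := fun _ => s) (i := ()) (a := DoorLoc.C1) (b := DoorLoc.C0)
          (s' := false) (by simp [doorGadget, doorTrav, hd]))
      erw [updState_unit] at this; exact this

/-- The trivial system: one copy, no connections. -/
def selfSys (G : Gadget) : System G :=
  ⟨Unit, inferInstance, fun _ _ => False, fun _ _ h => h.elim⟩

/-- Any gadget simulates itself. -/
lemma simulates_self (G : Gadget) : Simulates G G := by
  refine ⟨selfSys G, fun l => ((), l), fun s _ => s, ?_, ?_, ?_⟩
  · intro a b h; simpa using congrArg Prod.snd h
  · intro s s' h; exact congrFun h ()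
  · intro s s' a b
    constructor
    · intro h
      have key : ∀ p q, Relation.ReflTransGen (SysStep G (selfSys G)) p q →
          Relation.ReflTransGen G.trav (p.1 (), p.2.2) (q.1 (), q.2.2) := by
        intro p q h
        induction h with
        | refl => exact .refl
        | tail _ hstep ih =>
          cases hstep with
          | @trav σg i a b s'' htr =>
            refine ih.tail ?_
            have hupd : updState σg i s'' () = s'' := by cases i; exact if_pos rfl
            dsimp only
            rw [hupd]
            cases i; exact htr
          | move hc => exact hc.elim
      exact key _ _ h
    · intro h
      have key : ∀ (p q : G.State × G.Loc), Relation.ReflTransGen G.trav p q →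
          Relation.ReflTransGen (SysStep G (selfSys G))
            ((fun _ => p.1), ((), p.2)) ((fun _ => q.1), ((), q.2)) := by
        intro p q h
        induction h with
        | refl => exact .refl
        | @tail m q _ hstep ih =>
          refine ih.tail ?_
          have := SysStep.trav (G := G) (S := selfSys G)
            (σg := fun _ => m.1) (i := ()) (a := m.2) (b := q.2) (s' := q.1) hstep
          erw [updState_unit] at this; exact this
      exact key (s, a) (s', b) h

/-- Every door gadget (whether its opening mechanism is a tunnel or a
port, and whether each tunnel is directed or undirected) can simulate its corresponding
open-optional door, obtained by replacing the opening tunnel with a single opening port. -/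
theorem every_door_simulates_its_open_optional_door :
    (∀ dO dT dC : Bool, Simulates (doorGadget dO dT dC) (openOptDoorGadget dT dC)) ∧
    (∀ dT dC : Bool, Simulates (openOptDoorGadget dT dC) (openOptDoorGadget dT dC)) := by
  constructor
  · intro dO dT dC
    refine ⟨doorSys dO dT dC, fun l => ((), oloc2d l), fun s _ => s, ?_, ?_, ?_⟩
    · intro a b h
      have h2 := congrArg Prod.snd h
      cases a <;> cases b <;> simp_all [oloc2d] <;> rfl
    · intro s s' h; exact congrFun h ()
    · intro s s' a b
      constructor
      · intro h
        have := doorSys_forward _ _ h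
        erw [dloc2o_oloc2d, dloc2o_oloc2d] at this; exact this
      · intro h
        exact doorSys_backward (s, a) (s', b) h
  · intro dT dC; exact simulates_self _
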